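/- Let n ≥ 3 and let A_n be the adjacency matrix of the dihedral graph D_n. Then the cokernel ℤ^{ℤ/nℤ} / Im(1 − A_n^t) is isomorphic, as an abelian group, to: ℤ ⊕ ℤ if n ≡ 0 (mod 6); the trivial group if n ≡ 1 or 5 (mod 6); ℤ/3ℤ if n ≡ 2 or 4 (mod 6); and ℤ/2ℤ ⊕ ℤ/2ℤ if n ≡ 3 (mod 6). -/
import Mathlib


/-- The vertex adjacency matrix of the dihedral graph `D_n`:
`A_n(i,j) = 1` if `j = i + 1` or `j = i - 1` (mod `n`), and `0` otherwise. -/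
noncomputable def dihedralAdj (n : ℕ) : Matrix (ZMod n) (ZMod n) ℤ :=
  Matrix.of fun i j => if j = i + 1 ∨ j = i - 1 then 1 else 0

/-- The endomorphism `1 - A_n^t` of `ℤ^{ℤ/nℤ}`. -/
noncomputable def dihedralD (n : ℕ) [NeZero n] : (ZMod n → ℤ) →ₗ[ℤ] (ZMod n → ℤ) :=
  Matrix.mulVecLin (1 - (dihedralAdj n).transpose)

private lemma dih_two_ne_zero {n : ℕ} [NeZero n] (hn : 3 ≤ n) : (2 : ZMod n) ≠ 0 := by
  intro h
  have h2 : n ∣ 2 := (ZMod.natCast_eq_zero_iff 2 n).mp (by exact_mod_cast h)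
  have := Nat.le_of_dvd (by norm_num) h2
  omega

private lemma dih_D_single {n : ℕ} [NeZero n] (hn : 3 ≤ n) (j : ZMod n) :
    dihedralD n (Pi.single j 1) =
      Pi.single j 1 - Pi.single (j + 1) 1 - Pi.single (j - 1) 1 := by
  have hne : j + 1 ≠ j - 1 := by
    intro h
    apply dih_two_ne_zero hn
    have h2 : (j + 1) - (j - 1) = 0 := sub_eq_zero.mpr h
    calc (2 : ZMod n) = (j + 1) - (j - 1) := by ring
    _ = 0 := h2
  funext i
  simp only [dihedralD, Matrix.mulVecLin_apply, Matrix.mulVec, Matrix.sub_apply,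
    Matrix.one_apply, Matrix.transpose_apply, dihedralAdj, Matrix.of_apply,
    dotProduct, Pi.single_apply, mul_ite, mul_one, mul_zero, Pi.sub_apply]
  rw [Finset.sum_ite_eq' Finset.univ j
    (fun x => (if i = x then (1:ℤ) else 0) - if i = x + 1 ∨ i = x - 1 then 1 else 0)]
  simp only [Finset.mem_univ, if_true]
  by_cases hij : i = j <;> by_cases h1' : i = j + 1 <;> by_cases h2' : i = j - 1 <;>
    simp_all

private def fseq : ℕ → ℤ × ℤ
  | 0 => (1, 0)
  | 1 => (0, 1)
  | k + 2 => fseq (k + 1) - fseq k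

private lemma fseq_add_three (k : ℕ) : fseq (k + 3) = - fseq k := by
  show fseq ((k+1)+2) = _
  rw [fseq, fseq]
  abel

private lemma fseq_add_six (k : ℕ) : fseq (k + 6) = fseq k := by
  show fseq ((k+3)+3) = _
  rw [fseq_add_three, fseq_add_three, neg_neg]

private lemma fseq_mod (k : ℕ) : fseq k = fseq (k % 6) := by
  induction k using Nat.strong_induction_on with
  | _ k ih =>
    rcases lt_or_ge k 6 with h | h
    · rw [Nat.mod_eq_of_lt h]
    · obtain ⟨m, rfl⟩ : ∃ m, k = m + 6 := ⟨k - 6, by omega⟩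
      rw [fseq_add_six, ih m (by omega), Nat.add_mod_right]

private noncomputable def qq (n : ℕ) [NeZero n] (i : ZMod n) :
    (ZMod n → ℤ) ⧸ LinearMap.range (dihedralD n) :=
  Submodule.Quotient.mk (Pi.single i 1)

private lemma qq_rel {n : ℕ} [NeZero n] (hn : 3 ≤ n) (j : ZMod n) :
    qq n j = qq n (j + 1) + qq n (j - 1) := by
  unfold qq
  rw [← Submodule.Quotient.mk_add, Submodule.Quotient.eq]
  rw [show Pi.single j 1 - (Pi.single (j+1) 1 + Pi.single (j-1) 1)
      = Pi.single j 1 - Pi.single (j+1) 1 - Pi.single (j-1) 1 by abel,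
    ← dih_D_single hn j]
  exact LinearMap.mem_range_self _ _

private lemma qq_nat {n : ℕ} [NeZero n] (hn : 3 ≤ n) (k : ℕ) :
    qq n (k : ZMod n) = (fseq k).1 • qq n 0 + (fseq k).2 • qq n 1 := by
  induction k using Nat.strong_induction_on with
  | _ k ih =>
    match k with
    | 0 => simp [fseq]
    | 1 => simp [fseq]
    | (m + 2) =>
      have hrel := qq_rel hn ((m + 1 : ℕ) : ZMod n)
      have h1 : ((m + 1 : ℕ) : ZMod n) + 1 = ((m + 2 : ℕ) : ZMod n) := by push_cast; ring
      have h2 : ((m + 1 : ℕ) : ZMod n) - 1 = ((m : ℕ) : ZMod n) := by push_cast; ring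
      rw [h1, h2] at hrel
      have : qq n ((m + 2 : ℕ) : ZMod n) = qq n ((m+1 : ℕ) : ZMod n) - qq n ((m : ℕ) : ZMod n) := by
        rw [hrel]; abel
      rw [this, ih (m+1) (by omega), ih m (by omega), fseq, Prod.fst_sub, Prod.snd_sub,
        sub_smul, sub_smul]
      abel

private lemma qq_gen {n : ℕ} [NeZero n] (hn : 3 ≤ n)
    (x : (ZMod n → ℤ) ⧸ LinearMap.range (dihedralD n)) :
    ∃ s t : ℤ, x = s • qq n 0 + t • qq n 1 := by
  have hx : x ∈ Submodule.span ℤ {qq n 0, qq n 1} := by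
    obtain ⟨v, rfl⟩ := Submodule.Quotient.mk_surjective _ x
    have hv : v = ∑ i, Pi.single i (v i) := (Finset.univ_sum_single v).symm
    rw [hv]
    rw [show (Submodule.Quotient.mk (∑ i, Pi.single i (v i)) :
        (ZMod n → ℤ) ⧸ LinearMap.range (dihedralD n)) = ∑ i, v i • qq n i by
      rw [← Submodule.mkQ_apply, map_sum]
      refine Finset.sum_congr rfl fun i _ => ?_
      rw [show Pi.single i (v i) = v i • (Pi.single i 1 : ZMod n → ℤ) by
        funext j; by_cases h : j = i <;> simp [Pi.single_apply, h]]
      rw [map_smul]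
      rfl]
    refine Submodule.sum_mem _ fun i _ => Submodule.smul_mem _ _ ?_
    have : qq n i = qq n ((i.val : ℕ) : ZMod n) := by
      rw [ZMod.natCast_rightInverse i]
    rw [this, qq_nat hn]
    exact Submodule.add_mem _
      (Submodule.smul_mem _ _ (Submodule.subset_span (by simp)))
      (Submodule.smul_mem _ _ (Submodule.subset_span (by simp)))
  obtain ⟨s, t, h⟩ := Submodule.mem_span_pair.mp hx
  exact ⟨s, t, h.symm⟩

private lemma qq_lift {n : ℕ} [NeZero n] (hn : 3 ≤ n) {M : Type} [AddCommGroup M]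
    (w : ZMod n → M) (hw : ∀ j, w j = w (j + 1) + w (j - 1)) :
    ∃ φ : ((ZMod n → ℤ) ⧸ LinearMap.range (dihedralD n)) →ₗ[ℤ] M,
      ∀ i, φ (qq n i) = w i := by
  let φ₀ : (ZMod n → ℤ) →ₗ[ℤ] M :=
    { toFun := fun v => ∑ i, v i • w i
      map_add' := fun u v => by
        simp only [Pi.add_apply, add_smul]
        rw [Finset.sum_add_distrib]
      map_smul' := fun c v => by
        simp only [Pi.smul_apply, RingHom.id_apply, smul_eq_mul, mul_smul]
        rw [Finset.smul_sum] }
  have hφ₀ : ∀ i, φ₀ (Pi.single i 1) = w i := by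
    intro i
    show φ₀.toFun (Pi.single i 1) = w i
    simp only [φ₀]
    rw [Finset.sum_eq_single i]
    · simp
    · intro b _ hb; simp [Pi.single_apply, hb]
    · intro h; exact absurd (Finset.mem_univ i) h
  have hker : LinearMap.range (dihedralD n) ≤ LinearMap.ker φ₀ := by
    rintro _ ⟨v, rfl⟩
    have hv : v = ∑ i, v i • (Pi.single i 1 : ZMod n → ℤ) := by
      conv_lhs => rw [← Finset.univ_sum_single v]
      refine Finset.sum_congr rfl fun i _ => ?_
      funext j; by_cases h : j = i <;> simp [Pi.single_apply, h]
    rw [LinearMap.mem_ker, hv, map_sum, map_sum]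
    refine Finset.sum_eq_zero fun i _ => ?_
    rw [LinearMap.map_smul, LinearMap.map_smul, dih_D_single hn i, map_sub, map_sub, hφ₀, hφ₀, hφ₀]
    rw [hw i]
    simp
  refine ⟨(LinearMap.range (dihedralD n)).liftQ φ₀ hker, fun i => ?_⟩
  show ((LinearMap.range (dihedralD n)).liftQ φ₀ hker) (Submodule.Quotient.mk _) = _
  rw [Submodule.liftQ_apply]
  exact hφ₀ i

private def W6 : ZMod 6 → ℤ × ℤ := ![(1,0),(0,1),(-1,1),(-1,0),(0,-1),(1,-1)]
private lemma hW6 : ∀ u : ZMod 6, W6 u = W6 (u+1) + W6 (u-1) := by decide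
private def W2 : ZMod 2 → ZMod 3 := ![1,2]
private lemma hW2 : ∀ u : ZMod 2, W2 u = W2 (u+1) + W2 (u-1) := by decide
private def W3 : ZMod 3 → ZMod 2 × ZMod 2 := ![(1,0),(0,1),(1,1)]
private lemma hW3 : ∀ u : ZMod 3, W3 u = W3 (u+1) + W3 (u-1) := by decide

/-- the cokernel `ℤ^{ℤ/nℤ} / Im(1 - A_n^t)` for the dihedral graph `D_n`
(`n ≥ 3`) is: `ℤ ⊕ ℤ` if `n ≡ 0 (mod 6)`; trivial if `n ≡ 1, 5 (mod 6)`; `ℤ/3ℤ` if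
`n ≡ 2, 4 (mod 6)`; and `ℤ/2ℤ ⊕ ℤ/2ℤ` if `n ≡ 3 (mod 6)`. -/
theorem dihedral_cokernel_computation (n : ℕ) (hn : 3 ≤ n) [NeZero n] :
    (n % 6 = 0 →
      Nonempty (((ZMod n → ℤ) ⧸ LinearMap.range (dihedralD n)) ≃+ (ℤ × ℤ))) ∧
    (n % 6 = 1 ∨ n % 6 = 5 →
      Subsingleton ((ZMod n → ℤ) ⧸ LinearMap.range (dihedralD n))) ∧
    (n % 6 = 2 ∨ n % 6 = 4 →
      Nonempty (((ZMod n → ℤ) ⧸ LinearMap.range (dihedralD n)) ≃+ ZMod 3)) ∧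
    (n % 6 = 3 →
      Nonempty (((ZMod n → ℤ) ⧸ LinearMap.range (dihedralD n)) ≃+ (ZMod 2 × ZMod 2))) := by
  set a := qq n 0 with ha_def
  set b := qq n 1 with hb_def
  have hrel1 : (fseq n).1 • a + (fseq n).2 • b = a := by
    have h := qq_nat hn n
    rw [ZMod.natCast_self] at h
    exact h.symm
  have hrel2 : (fseq (n+1)).1 • a + (fseq (n+1)).2 • b = b := by
    have h := qq_nat hn (n+1)
    rw [show ((n+1 : ℕ) : ZMod n) = 1 by push_cast [ZMod.natCast_self]; ring] at h
    exact h.symm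
  refine ⟨fun h0 => ?_, fun h15 => ?_, fun h24 => ?_, fun h3 => ?_⟩
  -- case n % 6 = 0 : ℤ × ℤ
  · have h6 : (6:ℕ) ∣ n := Nat.dvd_of_mod_eq_zero h0
    have hw : ∀ j : ZMod n, W6 (ZMod.castHom h6 (ZMod 6) j)
        = W6 (ZMod.castHom h6 (ZMod 6) (j+1)) + W6 (ZMod.castHom h6 (ZMod 6) (j-1)) :=
      fun j => by rw [map_add, map_sub, map_one]; exact hW6 _
    obtain ⟨φ, hφ⟩ := qq_lift hn (M := ℤ × ℤ)
      (fun i => W6 (ZMod.castHom h6 (ZMod 6) i)) hw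
    have hφa : φ a = (1,0) := by
      have h' := hφ 0
      rw [show (ZMod.castHom h6 (ZMod 6)) 0 = 0 from map_zero _] at h'
      rw [h']; rfl
    have hφb : φ b = (0,1) := by
      have h' := hφ 1
      rw [show (ZMod.castHom h6 (ZMod 6)) 1 = 1 from map_one _] at h'
      rw [h']; rfl
    let ψ : ℤ × ℤ →+ ((ZMod n → ℤ) ⧸ LinearMap.range (dihedralD n)) :=
      AddMonoidHom.mk' (fun p => p.1 • a + p.2 • b)
        (fun p q => by simp only [Prod.fst_add, Prod.snd_add, add_smul]; abel)
    have hψ : ∀ p : ℤ × ℤ, ψ p = p.1 • a + p.2 • b := fun p => rfl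
    have hkey : ∀ p : ℤ × ℤ, φ (ψ p) = p := by
      intro p
      rw [hψ, map_add, LinearMap.map_smul, LinearMap.map_smul, hφa, hφb]
      ext <;> simp
    have hsur : Function.Surjective ψ := by
      intro x; obtain ⟨s, t, rfl⟩ := qq_gen hn x; exact ⟨(s,t), rfl⟩
    have hinj : Function.Injective ψ := fun p q hpq => by
      rw [← hkey p, ← hkey q, hpq]
    exact ⟨(AddEquiv.ofBijective ψ ⟨hinj, hsur⟩).symm⟩
  -- case n % 6 = 1 or 5 : trivial
  · have hab : a = 0 ∧ b = 0 := by
      rcases h15 with h | h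
      · have e1 : fseq n = (0,1) := by rw [fseq_mod, h]; decide
        have e2 : fseq (n+1) = (-1,1) := by
          rw [fseq_mod, show (n+1)%6 = 2 by omega]; decide
        rw [e1] at hrel1; rw [e2] at hrel2
        simp only [neg_smul, one_smul, zero_smul, zero_add] at hrel1 hrel2
        -- hrel1 : b = a ; hrel2 : -a + b = b
        have ha0 : a = 0 := by
          have h' : -a = 0 := by
            apply add_right_cancel (b := b); rw [hrel2, zero_add]
          simpa using h'
        exact ⟨ha0, by rw [hrel1, ha0]⟩
      · have e1 : fseq n = (1,-1) := by rw [fseq_mod, h]; decide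
        have e2 : fseq (n+1) = (1,0) := by
          rw [fseq_mod, show (n+1)%6 = 0 by omega]; decide
        rw [e1] at hrel1; rw [e2] at hrel2
        simp only [neg_smul, one_smul, zero_smul, add_zero] at hrel1 hrel2
        -- hrel1 : a + -b = a ; hrel2 : a = b
        have hb0 : b = 0 := by
          have h' : -b = 0 := by
            apply add_left_cancel (a := a); rw [hrel1, add_zero]
          simpa using h'
        exact ⟨by rw [hrel2, hb0], hb0⟩
    obtain ⟨ha0, hb0⟩ := hab
    refine ⟨fun x y => ?_⟩
    obtain ⟨s, t, hx⟩ := qq_gen hn x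
    obtain ⟨s', t', hy⟩ := qq_gen hn y
    rw [hx, hy, ← ha_def, ← hb_def, ha0, hb0]; simp
  -- case n % 6 = 2 or 4 : ZMod 3
  · have h2 : (2:ℕ) ∣ n := by rcases h24 with h | h <;> omega
    have hba : b = -a ∧ a + a + a = 0 := by
      rcases h24 with h | h
      · have e1 : fseq n = (-1,1) := by rw [fseq_mod, h]; decide
        have e2 : fseq (n+1) = (-1,0) := by
          rw [fseq_mod, show (n+1)%6 = 3 by omega]; decide
        rw [e1] at hrel1; rw [e2] at hrel2
        simp only [neg_smul, one_smul, zero_smul, add_zero] at hrel1 hrel2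
        -- hrel1 : -a + b = a ; hrel2 : -a = b
        refine ⟨hrel2.symm, ?_⟩
        have : -a + -a = a := by
          have hx := hrel1
          rw [← hrel2] at hx
          exact hx
        calc a + a + a = -(-a + -a) + a := by abel
        _ = -a + a := by rw [this]
        _ = 0 := by abel
      · have e1 : fseq n = (0,-1) := by rw [fseq_mod, h]; decide
        have e2 : fseq (n+1) = (1,-1) := by
          rw [fseq_mod, show (n+1)%6 = 5 by omega]; decide
        rw [e1] at hrel1; rw [e2] at hrel2
        simp only [neg_smul, one_smul, zero_smul, zero_add] at hrel1 hrel2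
        -- hrel1 : -b = a ; hrel2 : a + -b = b
        have hba : b = -a := by rw [← hrel1]; abel
        refine ⟨hba, ?_⟩
        have : a + a = -a := by
          have := hrel2; rw [hrel1, hba] at this; exact this
        calc a + a + a = (a + a) + a := by abel
        _ = -a + a := by rw [this]
        _ = 0 := by abel
    obtain ⟨hba, h3a⟩ := hba
    have hw : ∀ j : ZMod n, W2 (ZMod.castHom h2 (ZMod 2) j)
        = W2 (ZMod.castHom h2 (ZMod 2) (j+1)) + W2 (ZMod.castHom h2 (ZMod 2) (j-1)) :=
      fun j => by rw [map_add, map_sub, map_one]; exact hW2 _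
    obtain ⟨φ, hφ⟩ := qq_lift hn (M := ZMod 3)
      (fun i => W2 (ZMod.castHom h2 (ZMod 2) i)) hw
    have hφa : φ a = 1 := by
      have h' := hφ 0
      rw [show (ZMod.castHom h2 (ZMod 2)) 0 = 0 from map_zero _] at h'
      rw [h']; rfl
    let f : ℤ →+ ((ZMod n → ℤ) ⧸ LinearMap.range (dihedralD n)) :=
      AddMonoidHom.mk' (fun z => z • a) (fun z w => by simp only [add_smul])
    have hf : ∀ z : ℤ, f z = z • a := fun z => rfl
    have hf3 : f ((3:ℕ):ℤ) = 0 := by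
      rw [hf, show ((3:ℕ):ℤ) = 1+1+1 by norm_num, add_smul, add_smul, one_smul]
      exact h3a
    let ψ := ZMod.lift 3 ⟨f, hf3⟩
    have hkey : ∀ z : ZMod 3, φ (ψ z) = z := by
      intro z
      conv_lhs => rw [← ZMod.natCast_rightInverse z]
      rw [show ((z.val : ℕ) : ZMod 3) = ((z.val : ℤ) : ZMod 3) by push_cast; rfl,
        ZMod.lift_coe, hf, LinearMap.map_smul, hφa]
      rw [zsmul_eq_mul, mul_one]
      push_cast
      exact ZMod.natCast_rightInverse z
    have hsur : Function.Surjective ψ := by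
      intro x; obtain ⟨s, t, rfl⟩ := qq_gen hn x
      refine ⟨((s - t : ℤ) : ZMod 3), ?_⟩
      rw [← ha_def, ← hb_def]
      show ψ ((s - t : ℤ) : ZMod 3) = _
      rw [ZMod.lift_coe, hf, hba, smul_neg, sub_smul]
      abel
    have hinj : Function.Injective ψ := fun p q hpq => by
      rw [← hkey p, ← hkey q, hpq]
    exact ⟨(AddEquiv.ofBijective ψ ⟨hinj, hsur⟩).symm⟩
  -- case n % 6 = 3 : ZMod 2 × ZMod 2
  · have h3d : (3:ℕ) ∣ n := by omega
    have h2ab : a + a = 0 ∧ b + b = 0 := by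
      have e1 : fseq n = (-1,0) := by rw [fseq_mod, h3]; decide
      have e2 : fseq (n+1) = (0,-1) := by
        rw [fseq_mod, show (n+1)%6 = 4 by omega]; decide
      rw [e1] at hrel1; rw [e2] at hrel2
      simp only [neg_smul, one_smul, zero_smul, add_zero, zero_add] at hrel1 hrel2
      -- hrel1 : -a = a ; hrel2 : -b = b
      constructor
      · nth_rewrite 1 [← hrel1]; abel
      · nth_rewrite 1 [← hrel2]; abel
    obtain ⟨h2a, h2b⟩ := h2ab
    have hw : ∀ j : ZMod n, W3 (ZMod.castHom h3d (ZMod 3) j)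
        = W3 (ZMod.castHom h3d (ZMod 3) (j+1)) + W3 (ZMod.castHom h3d (ZMod 3) (j-1)) :=
      fun j => by rw [map_add, map_sub, map_one]; exact hW3 _
    obtain ⟨φ, hφ⟩ := qq_lift hn (M := ZMod 2 × ZMod 2)
      (fun i => W3 (ZMod.castHom h3d (ZMod 3) i)) hw
    have hφa : φ a = (1,0) := by
      have h' := hφ 0
      rw [show (ZMod.castHom h3d (ZMod 3)) 0 = 0 from map_zero _] at h'
      rw [h']; rfl
    have hφb : φ b = (0,1) := by
      have h' := hφ 1
      rw [show (ZMod.castHom h3d (ZMod 3)) 1 = 1 from map_one _] at h'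
      rw [h']; rfl
    let fa : ℤ →+ ((ZMod n → ℤ) ⧸ LinearMap.range (dihedralD n)) :=
      AddMonoidHom.mk' (fun z => z • a) (fun z w => by simp only [add_smul])
    let fb : ℤ →+ ((ZMod n → ℤ) ⧸ LinearMap.range (dihedralD n)) :=
      AddMonoidHom.mk' (fun z => z • b) (fun z w => by simp only [add_smul])
    have hfa2 : fa ((2:ℕ):ℤ) = 0 := by
      show ((2:ℕ):ℤ) • a = 0
      rw [show ((2:ℕ):ℤ) = 1+1 by norm_num, add_smul, one_smul]
      exact h2a
    have hfb2 : fb ((2:ℕ):ℤ) = 0 := by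
      show ((2:ℕ):ℤ) • b = 0
      rw [show ((2:ℕ):ℤ) = 1+1 by norm_num, add_smul, one_smul]
      exact h2b
    let ψ := (ZMod.lift 2 ⟨fa, hfa2⟩).coprod (ZMod.lift 2 ⟨fb, hfb2⟩)
    have hψc : ∀ s t : ℤ, ψ ((s : ZMod 2), (t : ZMod 2)) = s • a + t • b := by
      intro s t
      show ZMod.lift 2 ⟨fa, hfa2⟩ (s : ZMod 2) + ZMod.lift 2 ⟨fb, hfb2⟩ (t : ZMod 2) = _
      rw [ZMod.lift_coe, ZMod.lift_coe]; rfl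
    have hkey : ∀ p : ZMod 2 × ZMod 2, φ (ψ p) = p := by
      rintro ⟨u, v⟩
      have hu : ((u.val : ℤ) : ZMod 2) = u := by
        push_cast; exact ZMod.natCast_rightInverse u
      have hv : ((v.val : ℤ) : ZMod 2) = v := by
        push_cast; exact ZMod.natCast_rightInverse v
      conv_lhs => rw [← hu, ← hv]
      rw [hψc, map_add, LinearMap.map_smul, LinearMap.map_smul, hφa, hφb]
      ext
      · show (u.val : ℤ) • (1 : ZMod 2) + (v.val : ℤ) • (0 : ZMod 2) = u
        rw [zsmul_eq_mul, zsmul_eq_mul, mul_one, mul_zero, add_zero]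
        exact hu
      · show (u.val : ℤ) • (0 : ZMod 2) + (v.val : ℤ) • (1 : ZMod 2) = v
        rw [zsmul_eq_mul, zsmul_eq_mul, mul_one, mul_zero, zero_add]
        exact hv
    have hsur : Function.Surjective ψ := by
      intro x; obtain ⟨s, t, hx⟩ := qq_gen hn x
      rw [hx, ← ha_def, ← hb_def]
      exact ⟨((s : ZMod 2), (t : ZMod 2)), hψc s t⟩
    have hinj : Function.Injective ψ := fun p q hpq => by
      rw [← hkey p, ← hkey q, hpq]
    exact ⟨(AddEquiv.ofBijective ψ ⟨hinj, hsur⟩).symm⟩
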